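/- Let V and W be closed subspaces of a Hilbert space H and define β(V,W) := inf_{v ∈ V, v≠0} ‖P_W v‖/‖v‖ and μ(V,W) := sup_{η ∈ W^⊥, η≠0} ‖η‖/‖P_{V^⊥} η‖. Then μ(V,W) = β(V,W)^{-1} (with the convention that both sides are +∞ when β(V,W)=0). -/

import Mathlib

open scoped ENNReal

open Submodule

section Aux

variable {H : Type*} [NormedAddCommGroup H] [InnerProductSpace ℝ H]

/-- The key pointwise real inequality. -/
lemma key_real (V W : Submodule ℝ H) [HasOrthogonalProjection V] [HasOrthogonalProjection W]
    [HasOrthogonalProjection Vᗮ] {η : H} (hη : η ∈ Wᗮ) :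
    ‖η‖ * ‖(orthogonalProjection W (orthogonalProjection V η : H) : H)‖ ≤
      ‖(orthogonalProjection V η : H)‖ * ‖(orthogonalProjection Vᗮ η : H)‖ := by
  set v : H := (orthogonalProjection V η : H) with hv
  have h1 : (inner ℝ v η : ℝ) = ‖v‖ ^ 2 := by
    have hmem : η - v ∈ Vᗮ := sub_starProjection_mem_orthogonal η
    have h0 : (inner ℝ v (η - v) : ℝ) = 0 := hmem v (orthogonalProjection V η).2
    rw [inner_sub_right] at h0
    have h2 : (inner ℝ v η : ℝ) = inner ℝ v v := by linarith
    rw [h2, real_inner_self_eq_norm_sq]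
  have h2 : (inner ℝ v η : ℝ) ≤ ‖(orthogonalProjection Wᗮ v : H)‖ * ‖η‖ := by
    have hw : (inner ℝ ((orthogonalProjection W v : H)) η : ℝ) = 0 :=
      hη _ (orthogonalProjection W v).2
    have hdecomp : (orthogonalProjection W v : H) + (orthogonalProjection Wᗮ v : H) = v :=
      starProjection_add_starProjection_orthogonal (K := W) v
    have heq : (inner ℝ v η : ℝ) =
        inner ℝ ((orthogonalProjection W v : H) + (orthogonalProjection Wᗮ v : H)) η := by
      rw [hdecomp]
    rw [inner_add_left, hw, zero_add] at heq
    rw [heq]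
    exact real_inner_le_norm _ _
  have h3 : ‖v‖ ^ 2 = ‖(orthogonalProjection W v : H)‖ ^ 2
      + ‖(orthogonalProjection Wᗮ v : H)‖ ^ 2 := by
    simpa using norm_sq_eq_add_norm_sq_projection v W
  have h4 : ‖η‖ ^ 2 = ‖v‖ ^ 2 + ‖(orthogonalProjection Vᗮ η : H)‖ ^ 2 := by
    simpa [hv] using norm_sq_eq_add_norm_sq_projection η V
  have ha : ‖v‖ ^ 2 ≤ ‖(orthogonalProjection Wᗮ v : H)‖ * ‖η‖ := h1 ▸ h2
  have hb : (‖v‖ ^ 2) ^ 2 ≤ (‖(orthogonalProjection Wᗮ v : H)‖ * ‖η‖) ^ 2 := by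
    exact pow_le_pow_left₀ (sq_nonneg _) ha 2
  have hc : (‖η‖ * ‖(orthogonalProjection W v : H)‖) ^ 2 ≤
      (‖v‖ * ‖(orthogonalProjection Vᗮ η : H)‖) ^ 2 := by nlinarith [hb, h3, h4]
  have := (pow_le_pow_iff_left₀ (by positivity) (by positivity) (two_ne_zero)).mp hc
  exact this

lemma key_le (V W : Submodule ℝ H) [HasOrthogonalProjection V] [HasOrthogonalProjection W]
    [HasOrthogonalProjection Vᗮ] (hV : V ≠ ⊥) :
    (⨆ η : {x : H // x ∈ Wᗮ ∧ x ≠ 0},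
        (‖(η : H)‖₊ : ℝ≥0∞) / (‖(orthogonalProjection Vᗮ (η : H) : H)‖₊ : ℝ≥0∞)) ≤
      ⨆ v : {x : H // x ∈ V ∧ x ≠ 0},
        (‖(v : H)‖₊ : ℝ≥0∞) / (‖(orthogonalProjection W (v : H) : H)‖₊ : ℝ≥0∞) := by
  refine iSup_le fun η => ?_
  obtain ⟨hηW, hη0⟩ := η.2
  by_cases hP : (orthogonalProjection V (η : H) : H) = 0
  · -- η ∈ Vᗮ, so the LHS term is 1; any nonzero v ∈ V gives a term ≥ 1
    have hηVperp : (η : H) ∈ Vᗮ := by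
      rw [← Submodule.orthogonalProjectionOnto_eq_zero_iff (K := V)]
      exact Subtype.ext hP
    have hself : (orthogonalProjection Vᗮ (η : H) : H) = (η : H) :=
      starProjection_eq_self_iff.mpr hηVperp
    rw [hself]
    have h1 : (‖(η : H)‖₊ : ℝ≥0∞) / (‖(η : H)‖₊ : ℝ≥0∞) = 1 :=
      ENNReal.div_self (by simpa using hη0) (by simp)
    rw [h1]
    obtain ⟨v₀, hv₀V, hv₀0⟩ := Submodule.ne_bot_iff V |>.mp hV
    refine le_trans ?_ (le_iSup _ (⟨v₀, hv₀V, hv₀0⟩ : {x : H // x ∈ V ∧ x ≠ 0}))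
    have h3 : ‖v₀‖ ^ 2 = ‖(orthogonalProjection W v₀ : H)‖ ^ 2
        + ‖(orthogonalProjection Wᗮ v₀ : H)‖ ^ 2 := by
      simpa using norm_sq_eq_add_norm_sq_projection v₀ W
    have hle : ‖(orthogonalProjection W v₀ : H)‖ ≤ ‖v₀‖ := by
      nlinarith [norm_nonneg ((orthogonalProjection W v₀ : H)), norm_nonneg v₀,
        norm_nonneg ((orthogonalProjection Wᗮ v₀ : H))]
    rw [ENNReal.le_div_iff_mul_le (Or.inr (by simpa using hv₀0)) (Or.inl (by simp))]
    rw [one_mul]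
    exact_mod_cast hle
  · set v : H := (orthogonalProjection V (η : H) : H) with hvdef
    have hvV : v ∈ V := (orthogonalProjection V (η : H)).2
    refine le_trans ?_ (le_iSup _ (⟨v, hvV, hP⟩ : {x : H // x ∈ V ∧ x ≠ 0}))
    have hreal := key_real V W (η := (η : H)) hηW
    by_cases hd : (orthogonalProjection W v : H) = 0
    · have hvne : (‖v‖₊ : ℝ≥0∞) ≠ 0 := by simpa using hP
      rw [hd]
      simp only [nnnorm_zero, ENNReal.coe_zero, ENNReal.div_zero hvne]
      exact le_top
    · have hb0 : (‖(orthogonalProjection Vᗮ (η : H) : H)‖₊ : ℝ≥0∞) ≠ 0 := by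
        have hb : (orthogonalProjection Vᗮ (η : H) : H) ≠ 0 := by
          intro hb0
          rw [hb0] at hreal
          simp only [norm_zero, mul_zero] at hreal
          have h5 : ‖(orthogonalProjection W v : H)‖ > 0 := norm_pos_iff.mpr hd
          have h6 : ‖(η : H)‖ > 0 := norm_pos_iff.mpr hη0
          nlinarith
        simpa using hb
      have hd0 : (‖(orthogonalProjection W v : H)‖₊ : ℝ≥0∞) ≠ 0 := by simpa using hd
      rw [ENNReal.div_le_iff hb0 (by simp), div_eq_mul_inv, mul_right_comm, ← div_eq_mul_inv,
        ENNReal.le_div_iff_mul_le (Or.inl hd0) (Or.inl (by simp)), ← ENNReal.coe_mul,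
        ← ENNReal.coe_mul, ENNReal.coe_le_coe, ← NNReal.coe_le_coe]
      push_cast
      exact hreal
end Aux

theorem stmt6 {H : Type*} [NormedAddCommGroup H] [InnerProductSpace ℝ H] [CompleteSpace H]
    (V W : Submodule ℝ H) (hVc : IsClosed (V : Set H)) (hWc : IsClosed (W : Set H))
    [Submodule.HasOrthogonalProjection W] [Submodule.HasOrthogonalProjection Vᗮ]
    (hV : V ≠ ⊥) (hWperp : Wᗮ ≠ ⊥) :
    (⨆ η : {x : H // x ∈ Wᗮ ∧ x ≠ 0},
        (‖(η : H)‖₊ : ℝ≥0∞) / (‖(Submodule.orthogonalProjectionOnto Vᗮ (η : H) : H)‖₊ : ℝ≥0∞)) =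
      (⨅ v : {x : H // x ∈ V ∧ x ≠ 0},
        (‖(Submodule.orthogonalProjectionOnto W (v : H) : H)‖₊ : ℝ≥0∞) / (‖(v : H)‖₊ : ℝ≥0∞))⁻¹ := by
  haveI : CompleteSpace V := hVc.completeSpace_coe
  haveI : CompleteSpace W := hWc.completeSpace_coe
  rw [ENNReal.inv_iInf]
  have hinv : ∀ v : {x : H // x ∈ V ∧ x ≠ 0},
      ((‖(Submodule.orthogonalProjectionOnto W (v : H) : H)‖₊ : ℝ≥0∞) / (‖(v : H)‖₊ : ℝ≥0∞))⁻¹ =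
        (‖(v : H)‖₊ : ℝ≥0∞) / (‖(Submodule.orthogonalProjectionOnto W (v : H) : H)‖₊ : ℝ≥0∞) := by
    intro v
    rw [ENNReal.inv_div (Or.inl (by simp)) (Or.inl (by simpa using v.2.2))]
  rw [iSup_congr hinv]
  refine le_antisymm (key_le V W hV) ?_
  have h := key_le Wᗮ Vᗮ hWperp
  refine le_trans (le_of_eq ?_) h
  refine le_antisymm (iSup_le fun i => ?_) (iSup_le fun j => ?_)
  · refine le_trans (le_of_eq ?_)
      (le_iSup _ (⟨(i : H), V.le_orthogonal_orthogonal i.2.1, i.2.2⟩ :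
        {x : H // x ∈ Vᗮᗮ ∧ x ≠ 0}))
    congr 1
    rw [← starProjection_apply, ← starProjection_apply, starProjection_orthogonal_val (K := Wᗮ),
      eq_sub_of_add_eq (starProjection_add_starProjection_orthogonal (K := W) _)]
  · refine le_trans (le_of_eq ?_)
      (le_iSup _ (⟨(j : H), (Submodule.orthogonal_orthogonal V).le j.2.1, j.2.2⟩ :
        {x : H // x ∈ V ∧ x ≠ 0}))
    congr 1
    rw [← starProjection_apply, ← starProjection_apply, starProjection_orthogonal_val (K := Wᗮ),
      eq_sub_of_add_eq (starProjection_add_starProjection_orthogonal (K := W) _)]
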